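/- Let $a > 0$ and let $\zeta : \mathbb{R} \to \mathbb{R}$ be a twice continuously differentiable $a$-periodic function. Then there is a universal constant $C$ such that $\left(\int_0^a |\zeta'(s)|^{4/3}\, ds\right)^{3/4} \le C \left(\int_0^a \zeta(s)^2\, ds\right)^{1/4} \left(\int_0^a |\zeta''(s)|\, ds\right)^{1/2}$. -/

import Mathlib

open MeasureTheory intervalIntegral Set

lemma young13 {A V t : ℝ} (hA : 0 ≤ A) (hV : 0 ≤ V) (ht : 0 < t) :
    A ^ ((1:ℝ)/3) * V ^ ((2:ℝ)/3) ≤ (1/3) * (t * A) + (2/3) * (V * t ^ (-(1:ℝ)/2)) := by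
  have h := Real.geom_mean_le_arith_mean2_weighted (w₁ := 1/3) (w₂ := 2/3)
    (p₁ := t * A) (p₂ := V * t ^ (-(1:ℝ)/2)) (by norm_num) (by norm_num)
    (mul_nonneg ht.le hA) (mul_nonneg hV (Real.rpow_nonneg ht.le _)) (by norm_num)
  refine le_trans (le_of_eq ?_) h
  rw [Real.mul_rpow ht.le hA, Real.mul_rpow hV (Real.rpow_nonneg ht.le _),
    ← Real.rpow_mul ht.le]
  have : t ^ ((1:ℝ)/3) * (A ^ ((1:ℝ)/3) * (V ^ ((2:ℝ)/3) * t ^ (-(1:ℝ)/2 * (2/3))))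
      = (t ^ ((1:ℝ)/3) * t ^ (-(1:ℝ)/2 * (2/3))) * (A ^ ((1:ℝ)/3) * V ^ ((2:ℝ)/3)) := by ring
  rw [mul_assoc, this, ← Real.rpow_add ht]
  norm_num

lemma le_rpow_third {x y : ℝ} (hx : 0 ≤ x) (h : x ^ 3 ≤ y) : x ≤ y ^ ((1:ℝ)/3) := by
  have hy : 0 ≤ y := le_trans (by positivity) h
  calc x = (x ^ 3) ^ ((1:ℝ)/3) := by
        rw [← Real.rpow_natCast x 3, ← Real.rpow_mul hx]; norm_num
    _ ≤ y ^ ((1:ℝ)/3) := Real.rpow_le_rpow (by positivity) h (by norm_num)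

lemma sign_const {f : ℝ → ℝ} (hf : Continuous f) {α β : ℝ} (hab : α < β)
    (hne : ∀ x ∈ Ioo α β, f x ≠ 0) :
    (∀ x ∈ Ioo α β, 0 < f x) ∨ (∀ x ∈ Ioo α β, f x < 0) := by
  have key : ∀ x ∈ Ioo α β, ∀ y ∈ Ioo α β, 0 < f x → f y < 0 → False := by
    intro x hx y hy hfx hfy
    have hsub : uIcc y x ⊆ Ioo α β := (ordConnected_Ioo).uIcc_subset hy hx
    have h0 : (0:ℝ) ∈ uIcc (f y) (f x) := mem_uIcc.2 (Or.inl ⟨hfy.le, hfx.le⟩)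
    obtain ⟨c, hc, hfc⟩ := intermediate_value_uIcc (hf.continuousOn) h0
    exact hne c (hsub hc) hfc
  have hm : (α + β) / 2 ∈ Ioo α β := ⟨by linarith, by linarith⟩
  rcases (hne _ hm).lt_or_gt with h | h
  · right
    intro x hx
    rcases (hne x hx).lt_or_gt with h' | h'
    · exact h'
    · exact absurd (key x hx _ hm h' h) (by simp)
  · left
    intro x hx
    rcases (hne x hx).lt_or_gt with h' | h'
    · exact absurd (key _ hm x hx h h') (by simp)
    · exact h'


lemma core_pos (ζ : ℝ → ℝ) (hζ : ContDiff ℝ 2 ζ) {α β : ℝ} (hab : α < β)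
    (h0 : deriv ζ α = 0) (hpos : ∀ x ∈ Ioo α β, 0 < deriv ζ x) :
    ∫ x in α..β, |deriv ζ x| ^ ((4:ℝ)/3) ≤
      4 * (∫ x in α..β, (ζ x)^2) ^ ((1:ℝ)/3) *
        (∫ x in α..β, |deriv (deriv ζ) x|) ^ ((2:ℝ)/3) := by
  have h2 : ContDiff ℝ (1+1) ζ := by exact_mod_cast hζ
  have h1 : ContDiff ℝ 1 (deriv ζ) := (contDiff_succ_iff_deriv.mp h2).2.2
  have hd1 : Differentiable ℝ ζ := hζ.differentiable (by norm_num)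
  have hc1 : Continuous (deriv ζ) := hζ.continuous_deriv (by norm_num)
  have hd2 : Differentiable ℝ (deriv ζ) := h1.differentiable (by norm_num)
  have hc2 : Continuous (deriv (deriv ζ)) := h1.continuous_deriv le_rfl
  set V := ∫ x in α..β, |deriv (deriv ζ) x| with hVdef
  set A := ∫ x in α..β, (ζ x)^2 with hAdef
  have hVnn : 0 ≤ V := integral_nonneg hab.le (fun u _ => abs_nonneg _)
  have hAnn : 0 ≤ A := integral_nonneg hab.le (fun u _ => sq_nonneg _)
  have hsup : ∀ x ∈ Icc α β, deriv ζ x ≤ V := by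
    intro x hx
    have hFTC : ∫ y in α..x, deriv (deriv ζ) y = deriv ζ x - deriv ζ α :=
      integral_deriv_eq_sub (fun y _ => hd2 y) ((hc2.intervalIntegrable _ _))
    have h1' : deriv ζ x = ∫ y in α..x, deriv (deriv ζ) y := by rw [hFTC, h0, sub_zero]
    calc deriv ζ x ≤ |∫ y in α..x, deriv (deriv ζ) y| := by rw [h1']; exact le_abs_self _
      _ ≤ ∫ y in α..x, |deriv (deriv ζ) y| := abs_integral_le_integral_abs hx.1
      _ ≤ V := integral_mono_interval le_rfl hx.1 hx.2
          (Filter.Eventually.of_forall (fun y => abs_nonneg _))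
          ((hc2.abs).intervalIntegrable _ _)
  have hIccnn : ∀ x ∈ Icc α β, 0 ≤ deriv ζ x := by
    intro x hx
    rcases eq_or_lt_of_le hx.1 with h | h
    · rw [← h, h0]
    rcases eq_or_lt_of_le hx.2 with h' | h'
    · subst h'
      have hne : (nhdsWithin x (Ioo α x)).NeBot := by
        refine mem_closure_iff_nhdsWithin_neBot.mp ?_
        rw [closure_Ioo hab.ne]
        exact ⟨hab.le, le_rfl⟩
      exact ge_of_tendsto (hc1.continuousWithinAt)
        (eventually_nhdsWithin_of_forall (fun y hy => (hpos y hy).le))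
    · exact (hpos x ⟨h, h'⟩).le
  have hi1 : IntervalIntegrable (deriv ζ) volume α β := hc1.intervalIntegrable _ _
  have hδeq : ∫ x in α..β, deriv ζ x = ζ β - ζ α :=
    integral_deriv_eq_sub (fun y _ => hd1 y) hi1
  have hδpos : 0 < ζ β - ζ α := hδeq ▸ intervalIntegral_pos_of_pos_on hi1 hpos hab
  set δ := ζ β - ζ α with hδdef
  have hVpos : 0 < V := lt_of_lt_of_le (hpos ((α+β)/2) ⟨by linarith, by linarith⟩)
      (hsup ((α+β)/2) ⟨by linarith, by linarith⟩)
  clear_value δ A V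
  have hTbound : ∫ x in α..β, |deriv ζ x| ^ ((4:ℝ)/3) ≤ V ^ ((1:ℝ)/3) * δ := by
    have hpt : ∀ x ∈ Icc α β, |deriv ζ x| ^ ((4:ℝ)/3) ≤ V ^ ((1:ℝ)/3) * deriv ζ x := by
      intro x hx
      have h0x : 0 ≤ deriv ζ x := hIccnn x hx
      rw [abs_of_nonneg h0x]
      have e : (deriv ζ x) ^ ((4:ℝ)/3) = (deriv ζ x) ^ ((1:ℝ)/3) * deriv ζ x := by
        rw [show (4:ℝ)/3 = 1/3 + 1 by norm_num, Real.rpow_add' h0x (by norm_num), Real.rpow_one]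
      rw [e]
      exact mul_le_mul_of_nonneg_right (Real.rpow_le_rpow h0x (hsup x hx) (by norm_num)) h0x
    calc ∫ x in α..β, |deriv ζ x| ^ ((4:ℝ)/3)
        ≤ ∫ x in α..β, V ^ ((1:ℝ)/3) * deriv ζ x :=
          integral_mono_on hab.le
            ((hc1.abs.rpow_const (fun x => Or.inr (by norm_num))).intervalIntegrable _ _)
            ((continuous_const.mul hc1).intervalIntegrable _ _) hpt
      _ = V ^ ((1:ℝ)/3) * δ := by rw [intervalIntegral.integral_const_mul, hδeq]
  have hmono : StrictMonoOn ζ (Icc α β) := by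
    apply strictMonoOn_of_deriv_pos (convex_Icc α β) (hζ.continuous.continuousOn)
    intro x hx
    rw [interior_Icc] at hx
    exact hpos x hx
  have hkey : δ ^ 3 ≤ 64 * A * V := by
    by_cases hc : δ/2 ≤ ζ β
    · -- use right part
      obtain ⟨s, hs, hζs⟩ := intermediate_value_Icc hab.le (hζ.continuous.continuousOn)
        (show ζ β - δ/4 ∈ Icc (ζ α) (ζ β) from ⟨by rw [hδdef]; linarith, by linarith⟩)
      have hb1 : δ/4 ≤ (β - s) * V := by
        have hFTC2 : ∫ y in s..β, deriv ζ y = ζ β - ζ s :=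
          integral_deriv_eq_sub (fun y _ => hd1 y) (hc1.intervalIntegrable _ _)
        have hm : ∫ y in s..β, deriv ζ y ≤ ∫ y in s..β, V :=
          integral_mono_on hs.2 (hc1.intervalIntegrable _ _) intervalIntegrable_const
            (fun y hy => hsup y ⟨le_trans hs.1 hy.1, hy.2⟩)
        rw [hFTC2, hζs, intervalIntegral.integral_const, smul_eq_mul] at hm
        linarith
      have hb2 : (δ/4)^2 * (β - s) ≤ A := by
        have h1' : ∫ y in s..β, (δ/4)^2 ≤ ∫ y in s..β, (ζ y)^2 := by
          refine integral_mono_on hs.2 intervalIntegrable_const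
            (((hζ.continuous.pow 2)).intervalIntegrable _ _) ?_
          intro y hy
          have hy' : y ∈ Icc α β := ⟨le_trans hs.1 hy.1, hy.2⟩
          have hζy : δ/4 ≤ ζ y := by
            have hmle : ζ s ≤ ζ y := hmono.monotoneOn hs hy' hy.1
            rw [hζs] at hmle; linarith
          exact pow_le_pow_left₀ (by linarith) hζy 2
        have h2' : ∫ y in s..β, (ζ y)^2 ≤ A := by
          rw [hAdef]
          refine integral_mono_interval hs.1 hs.2 le_rfl
            (Filter.Eventually.of_forall (fun y => sq_nonneg _))
            ((hζ.continuous.pow 2).intervalIntegrable _ _)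
        rw [intervalIntegral.integral_const, smul_eq_mul] at h1'
        nlinarith
      have h64 : (δ/4)^2 * (δ/4) ≤ A * V := by
        calc (δ/4)^2 * (δ/4) ≤ (δ/4)^2 * ((β - s) * V) :=
              mul_le_mul_of_nonneg_left hb1 (sq_nonneg _)
          _ = ((δ/4)^2 * (β - s)) * V := by ring
          _ ≤ A * V := mul_le_mul_of_nonneg_right hb2 hVnn
      nlinarith [h64]
    · push_neg at hc
      have hζα : ζ α = ζ β - δ := by rw [hδdef]; ring
      obtain ⟨s, hs, hζs⟩ := intermediate_value_Icc hab.le (hζ.continuous.continuousOn)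
        (show ζ α + δ/4 ∈ Icc (ζ α) (ζ β) from ⟨by linarith, by rw [hζα]; linarith⟩)
      have hb1 : δ/4 ≤ (s - α) * V := by
        have hFTC2 : ∫ y in α..s, deriv ζ y = ζ s - ζ α :=
          integral_deriv_eq_sub (fun y _ => hd1 y) (hc1.intervalIntegrable _ _)
        have hm : ∫ y in α..s, deriv ζ y ≤ ∫ y in α..s, V :=
          integral_mono_on hs.1 (hc1.intervalIntegrable _ _) intervalIntegrable_const
            (fun y hy => hsup y ⟨hy.1, le_trans hy.2 hs.2⟩)
        rw [hFTC2, hζs, intervalIntegral.integral_const, smul_eq_mul] at hm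
        linarith
      have hb2 : (δ/4)^2 * (s - α) ≤ A := by
        have h1' : ∫ y in α..s, (δ/4)^2 ≤ ∫ y in α..s, (ζ y)^2 := by
          refine integral_mono_on hs.1 intervalIntegrable_const
            (((hζ.continuous.pow 2)).intervalIntegrable _ _) ?_
          intro y hy
          have hy' : y ∈ Icc α β := ⟨hy.1, le_trans hy.2 hs.2⟩
          have hζy : ζ y ≤ -(δ/4) := by
            have hmle : ζ y ≤ ζ s := hmono.monotoneOn hy' hs hy.2
            rw [hζs, hζα] at hmle; linarith
          nlinarith [sq_nonneg (ζ y + δ/4), hζy, hδpos.le]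
        have h2' : ∫ y in α..s, (ζ y)^2 ≤ A := by
          rw [hAdef]
          refine integral_mono_interval le_rfl hs.1 hs.2
            (Filter.Eventually.of_forall (fun y => sq_nonneg _))
            ((hζ.continuous.pow 2).intervalIntegrable _ _)
        rw [intervalIntegral.integral_const, smul_eq_mul] at h1'
        nlinarith
      have h64 : (δ/4)^2 * (δ/4) ≤ A * V := by
        calc (δ/4)^2 * (δ/4) ≤ (δ/4)^2 * ((s - α) * V) :=
              mul_le_mul_of_nonneg_left hb1 (sq_nonneg _)
          _ = ((δ/4)^2 * (s - α)) * V := by ring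
          _ ≤ A * V := mul_le_mul_of_nonneg_right hb2 hVnn
      nlinarith [h64]
  have hδle : δ ≤ 4 * A ^ ((1:ℝ)/3) * V ^ ((1:ℝ)/3) := by
    calc δ ≤ (64 * A * V) ^ ((1:ℝ)/3) := le_rpow_third hδpos.le hkey
      _ = 4 * A ^ ((1:ℝ)/3) * V ^ ((1:ℝ)/3) := by
        rw [Real.mul_rpow (by positivity) hVnn, Real.mul_rpow (by norm_num) hAnn]
        congr 2
        rw [show (64:ℝ) = 4 ^ (3:ℕ) by norm_num, ← Real.rpow_natCast 4 3,
          ← Real.rpow_mul (by norm_num)]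
        norm_num
  calc ∫ x in α..β, |deriv ζ x| ^ ((4:ℝ)/3) ≤ V ^ ((1:ℝ)/3) * δ := hTbound
    _ ≤ V ^ ((1:ℝ)/3) * (4 * A ^ ((1:ℝ)/3) * V ^ ((1:ℝ)/3)) :=
        mul_le_mul_of_nonneg_left hδle (Real.rpow_nonneg hVnn _)
    _ = 4 * A ^ ((1:ℝ)/3) * (V ^ ((1:ℝ)/3) * V ^ ((1:ℝ)/3)) := by ring
    _ = 4 * A ^ ((1:ℝ)/3) * V ^ ((2:ℝ)/3) := by
        rw [← Real.rpow_add hVpos]; norm_num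


lemma core_ineq (ζ : ℝ → ℝ) (hζ : ContDiff ℝ 2 ζ) {α β : ℝ} (hab : α < β)
    (h0 : deriv ζ α = 0) (hne : ∀ x ∈ Ioo α β, deriv ζ x ≠ 0) :
    ∫ x in α..β, |deriv ζ x| ^ ((4:ℝ)/3) ≤
      4 * (∫ x in α..β, (ζ x)^2) ^ ((1:ℝ)/3) *
        (∫ x in α..β, |deriv (deriv ζ) x|) ^ ((2:ℝ)/3) := by
  have hc1 : Continuous (deriv ζ) := hζ.continuous_deriv (by norm_num)
  rcases sign_const hc1 hab hne with hpos | hneg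
  · exact core_pos ζ hζ hab h0 hpos
  · have hζn : ContDiff ℝ 2 (fun x => -ζ x) := hζ.neg
    have hd : deriv (fun x => -ζ x) = fun x => -deriv ζ x := by
      funext x; exact deriv.neg
    have hdd : deriv (deriv (fun x => -ζ x)) = fun x => -(deriv (deriv ζ) x) := by
      rw [hd]; funext x; exact deriv.neg
    have hres := core_pos (fun x => -ζ x) hζn hab
      (by rw [hd]; simp [h0])
      (by intro x hx; rw [hd]; simpa using hneg x hx)
    simpa [hd, hdd, abs_neg, neg_sq] using hres

lemma periodic_deriv_eq (ζ : ℝ → ℝ) {a : ℝ} (hper : ∀ s, ζ (s + a) = ζ s) (s : ℝ) :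
    deriv ζ (s + a) = deriv ζ s := by
  have hfun : (fun y => ζ (y + a)) = ζ := funext hper
  conv_lhs => rw [← deriv_comp_add_const ζ a s]
  rw [hfun]

lemma exists_deriv_zero (ζ : ℝ → ℝ) (hζ : ContDiff ℝ 2 ζ) {a : ℝ} (ha : 0 < a)
    (hper : ∀ s, ζ (s + a) = ζ s) : ∃ x₀ ∈ Icc (0:ℝ) a, deriv ζ x₀ = 0 := by
  by_contra h
  push_neg at h
  have hc1 : Continuous (deriv ζ) := hζ.continuous_deriv (by norm_num)
  have hd1 : Differentiable ℝ ζ := hζ.differentiable (by norm_num)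
  have hne : ∀ x ∈ Ioo (0:ℝ) a, deriv ζ x ≠ 0 := fun x hx => h x (Ioo_subset_Icc_self hx)
  have hint : ∫ x in (0:ℝ)..a, deriv ζ x = 0 := by
    rw [integral_deriv_eq_sub (fun y _ => hd1 y) (hc1.intervalIntegrable _ _)]
    rw [show ζ a = ζ 0 from by simpa using hper 0]
    ring
  rcases sign_const hc1 ha hne with hp | hn
  · have := intervalIntegral_pos_of_pos_on (hc1.intervalIntegrable _ _) hp ha
    rw [hint] at this; exact lt_irrefl 0 this
  · have := intervalIntegral_pos_of_pos_on ((hc1.neg).intervalIntegrable _ _)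
      (fun x hx => by simpa using hn x hx) ha
    simp only [Pi.neg_apply] at this; rw [intervalIntegral.integral_neg, hint, neg_zero] at this
    exact lt_irrefl 0 this

lemma global_bound (ζ : ℝ → ℝ) (hζ : ContDiff ℝ 2 ζ) {a : ℝ} (ha : 0 < a)
    (hper : ∀ s, ζ (s + a) = ζ s) {x₀ : ℝ} (hx₀ : deriv ζ x₀ = 0) {t : ℝ} (ht : 0 < t) :
    ∫ x in x₀..(x₀ + a), |deriv ζ x| ^ ((4:ℝ)/3) ≤
      ∫ x in x₀..(x₀ + a),
        ((4/3) * t * (ζ x)^2 + (8/3) * t ^ (-(1:ℝ)/2) * |deriv (deriv ζ) x|) := by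
  have hc1 : Continuous (deriv ζ) := hζ.continuous_deriv (by norm_num)
  have h2 : ContDiff ℝ (1+1) ζ := by exact_mod_cast hζ
  have h1 : ContDiff ℝ 1 (deriv ζ) := (contDiff_succ_iff_deriv.mp h2).2.2
  have hc2 : Continuous (deriv (deriv ζ)) := h1.continuous_deriv le_rfl
  set f : ℝ → ℝ := fun x => |deriv ζ x| ^ ((4:ℝ)/3) with hfdef
  set g : ℝ → ℝ := fun x => (4/3) * t * (ζ x)^2 + (8/3) * t ^ (-(1:ℝ)/2) * |deriv (deriv ζ) x|
    with hgdef
  have hfc : Continuous f := (hc1.abs).rpow_const (fun x => Or.inr (by norm_num))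
  have hgc : Continuous g := ((continuous_const.mul (hζ.continuous.pow 2))).add
      (continuous_const.mul hc2.abs)
  have hfnn : ∀ x, 0 ≤ f x := fun x => Real.rpow_nonneg (abs_nonneg _) _
  have hgnn : ∀ x, 0 ≤ g x := fun x => by
    have h3 : (0:ℝ) ≤ t ^ (-(1:ℝ)/2) := Real.rpow_nonneg ht.le _
    have h4 := sq_nonneg (ζ x)
    have h5 := abs_nonneg (deriv (deriv ζ) x)
    positivity
  have hx₀lt : x₀ < x₀ + a := by linarith
  rw [intervalIntegral.integral_of_le hx₀lt.le, intervalIntegral.integral_of_le hx₀lt.le,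
    MeasureTheory.integral_Ioc_eq_integral_Ioo, MeasureTheory.integral_Ioc_eq_integral_Ioo]
  set S : Set ℝ := Ioo x₀ (x₀ + a) with hSdef
  have hfi : IntegrableOn f S := (hfc.integrableOn_Icc).mono_set Ioo_subset_Icc_self
  have hgi : IntegrableOn g S := (hgc.integrableOn_Icc).mono_set Ioo_subset_Icc_self
  -- the zero set and components
  set Z : Set ℝ := {y | deriv ζ y = 0} with hZdef
  have hZc : IsClosed Z := isClosed_eq hc1 continuous_const
  have hx₀a : deriv ζ (x₀ + a) = 0 := (periodic_deriv_eq ζ hper x₀).trans hx₀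
  set U : Set ℝ := S ∩ {y | deriv ζ y ≠ 0} with hUdef
  have hUopen : IsOpen U := isOpen_Ioo.inter hZc.isOpen_compl
  have hUS : U ⊆ S := inter_subset_left
  set P : ℝ → ℝ := fun x => sSup (Z ∩ Icc x₀ x) with hPdef
  set Q : ℝ → ℝ := fun x => sInf (Z ∩ Icc x (x₀ + a)) with hQdef
  have hprop : ∀ x ∈ U, (deriv ζ (P x) = 0 ∧ x₀ ≤ P x ∧ P x < x) ∧
      (deriv ζ (Q x) = 0 ∧ x < Q x ∧ Q x ≤ x₀ + a) ∧
      (∀ y ∈ Ioo (P x) (Q x), deriv ζ y ≠ 0) := by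
    intro x hx
    obtain ⟨hxS, hxne⟩ := hx
    have hne1 : (Z ∩ Icc x₀ x).Nonempty := ⟨x₀, hx₀, le_refl _, hxS.1.le⟩
    have hbdd1 : BddAbove (Z ∩ Icc x₀ x) := ⟨x, fun y hy => hy.2.2⟩
    have hPmem : P x ∈ Z ∩ Icc x₀ x := (hZc.inter isClosed_Icc).csSup_mem hne1 hbdd1
    have hPlt : P x < x := lt_of_le_of_ne hPmem.2.2 (fun h => hxne (h ▸ hPmem.1))
    have hne2 : (Z ∩ Icc x (x₀ + a)).Nonempty := ⟨x₀ + a, hx₀a, hxS.2.le, le_refl _⟩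
    have hbdd2 : BddBelow (Z ∩ Icc x (x₀ + a)) := ⟨x, fun y hy => hy.2.1⟩
    have hQmem : Q x ∈ Z ∩ Icc x (x₀ + a) := (hZc.inter isClosed_Icc).csInf_mem hne2 hbdd2
    have hQgt : x < Q x := lt_of_le_of_ne hQmem.2.1 (fun h => hxne (h.symm ▸ hQmem.1))
    refine ⟨⟨hPmem.1, hPmem.2.1, hPlt⟩, ⟨hQmem.1, hQgt, hQmem.2.2⟩, ?_⟩
    intro y hy hy0
    rcases le_or_gt y x with hyx | hyx
    · exact absurd (le_csSup hbdd1 ⟨hy0, le_trans hPmem.2.1 hy.1.le, hyx⟩) (not_le.mpr hy.1)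
    · exact absurd (csInf_le hbdd2 ⟨hy0, hyx.le, le_trans hy.2.le hQmem.2.2⟩) (not_le.mpr hy.2)
  have hcomp : ∀ x ∈ U, ∫ y in Ioo (P x) (Q x), f y ≤ ∫ y in Ioo (P x) (Q x), g y := by
    intro x hx
    obtain ⟨⟨hP0, _, hPx⟩, ⟨_, hxQ, _⟩, hno⟩ := hprop x hx
    have hPQ : P x < Q x := lt_trans hPx hxQ
    have hAC : (0:ℝ) ≤ ∫ y in (P x)..(Q x), (ζ y)^2 :=
      intervalIntegral.integral_nonneg hPQ.le (fun u _ => sq_nonneg _)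
    have hVC : (0:ℝ) ≤ ∫ y in (P x)..(Q x), |deriv (deriv ζ) y| :=
      intervalIntegral.integral_nonneg hPQ.le (fun u _ => abs_nonneg _)
    have hcore := core_ineq ζ hζ hPQ hP0 hno
    have hyoung := young13 hAC hVC ht
    have hgint : ∫ y in (P x)..(Q x), g y =
        (4/3) * t * (∫ y in (P x)..(Q x), (ζ y)^2)
          + (8/3) * t ^ (-(1:ℝ)/2) * (∫ y in (P x)..(Q x), |deriv (deriv ζ) y|) := by
      rw [hgdef]
      rw [intervalIntegral.integral_add (f := fun x => (4/3) * t * (ζ x)^2)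
        (g := fun x => (8/3) * t ^ (-(1:ℝ)/2) * |deriv (deriv ζ) x|)
        (((continuous_const.mul (hζ.continuous.pow 2))).intervalIntegrable _ _)
        ((continuous_const.mul hc2.abs).intervalIntegrable _ _),
        intervalIntegral.integral_const_mul, intervalIntegral.integral_const_mul]
    have hineq : ∫ y in (P x)..(Q x), f y ≤ ∫ y in (P x)..(Q x), g y := by
      rw [hgint]
      calc ∫ y in (P x)..(Q x), f y
          ≤ 4 * (∫ y in (P x)..(Q x), (ζ y)^2) ^ ((1:ℝ)/3) *
            (∫ y in (P x)..(Q x), |deriv (deriv ζ) y|) ^ ((2:ℝ)/3) := hcore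
        _ = 4 * ((∫ y in (P x)..(Q x), (ζ y)^2) ^ ((1:ℝ)/3) *
            (∫ y in (P x)..(Q x), |deriv (deriv ζ) y|) ^ ((2:ℝ)/3)) := by ring
        _ ≤ 4 * ((1/3) * (t * (∫ y in (P x)..(Q x), (ζ y)^2))
            + (2/3) * ((∫ y in (P x)..(Q x), |deriv (deriv ζ) y|) * t ^ (-(1:ℝ)/2))) :=
            by exact mul_le_mul_of_nonneg_left hyoung (by norm_num)
        _ = (4/3) * t * (∫ y in (P x)..(Q x), (ζ y)^2)
            + (8/3) * t ^ (-(1:ℝ)/2) * (∫ y in (P x)..(Q x), |deriv (deriv ζ) y|) := by ring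
    calc ∫ y in Ioo (P x) (Q x), f y
        = ∫ y in (P x)..(Q x), f y := by
          rw [intervalIntegral.integral_of_le hPQ.le, MeasureTheory.integral_Ioc_eq_integral_Ioo]
      _ ≤ ∫ y in (P x)..(Q x), g y := hineq
      _ = ∫ y in Ioo (P x) (Q x), g y := by
          rw [intervalIntegral.integral_of_le hPQ.le, MeasureTheory.integral_Ioc_eq_integral_Ioo]
  -- the family of components
  set 𝒞 : Set (Set ℝ) := (fun x => Ioo (P x) (Q x)) '' U with hCdef
  have hxJ : ∀ x ∈ U, x ∈ Ioo (P x) (Q x) := fun x hx =>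
    ⟨(hprop x hx).1.2.2, (hprop x hx).2.1.2.1⟩
  have hJsubU : ∀ x ∈ U, Ioo (P x) (Q x) ⊆ U := by
    intro x hx y hy
    obtain ⟨⟨_, hP1, _⟩, ⟨_, _, hQ2⟩, hno⟩ := hprop x hx
    exact ⟨⟨lt_of_le_of_lt hP1 hy.1, lt_of_lt_of_le hy.2 hQ2⟩, hno y hy⟩
  have hUeq : U = ⋃ C ∈ 𝒞, C := by
    apply Subset.antisymm
    · intro x hx
      exact mem_biUnion ⟨x, hx, rfl⟩ (hxJ x hx)
    · intro y hy
      rcases mem_iUnion₂.mp hy with ⟨C, hC, hyC⟩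
      obtain ⟨x, hx, rfl⟩ := hC
      exact hJsubU x hx hyC
  have hEOD : ∀ x ∈ U, ∀ y ∈ U, (Ioo (P x) (Q x) ∩ Ioo (P y) (Q y)).Nonempty →
      Ioo (P x) (Q x) = Ioo (P y) (Q y) := by
    intro x hx y hy hzz
    obtain ⟨z, hzx, hzy⟩ := hzz
    obtain ⟨⟨hPx0, _, _⟩, ⟨hQx0, _, _⟩, hnox⟩ := hprop x hx
    obtain ⟨⟨hPy0, _, _⟩, ⟨hQy0, _, _⟩, hnoy⟩ := hprop y hy
    have h1 : ¬ (P x < P y) := fun h => hnox (P y) ⟨h, lt_trans hzy.1 hzx.2⟩ hPy0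
    have h2 : ¬ (P y < P x) := fun h => hnoy (P x) ⟨h, lt_trans hzx.1 hzy.2⟩ hPx0
    have h3 : ¬ (Q x < Q y) := fun h => hnoy (Q x) ⟨lt_trans hzy.1 hzx.2, h⟩ hQx0
    have h4 : ¬ (Q y < Q x) := fun h => hnox (Q y) ⟨lt_trans hzx.1 hzy.2, h⟩ hQy0
    rw [le_antisymm (not_lt.mp h2) (not_lt.mp h1), le_antisymm (not_lt.mp h4) (not_lt.mp h3)]
  have hpd : 𝒞.PairwiseDisjoint id := by
    intro C1 h1' C2 h2' hne12
    obtain ⟨x, hx, rfl⟩ := h1'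
    obtain ⟨y, hy, rfl⟩ := h2'
    simp only [Function.onFun, id]
    by_contra hdis
    rw [Set.not_disjoint_iff_nonempty_inter] at hdis
    exact hne12 (hEOD x hx y hy hdis)
  have hcount : 𝒞.Countable := hpd.countable_of_isOpen
    (by rintro C ⟨x, hx, rfl⟩; exact isOpen_Ioo)
    (by rintro C ⟨x, hx, rfl⟩; exact ⟨x, hxJ x hx⟩)
  have hmeasC : ∀ C ∈ 𝒞, MeasurableSet (id C : Set ℝ) := by
    rintro C ⟨x, hx, rfl⟩; exact measurableSet_Ioo
  -- lintegral versions
  have hsplitf : ∫⁻ x in U, ENNReal.ofReal (f x) = ∑' C : 𝒞, ∫⁻ x in (C : Set ℝ), ENNReal.ofReal (f x) := by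
    conv_lhs => rw [hUeq]
    exact MeasureTheory.lintegral_biUnion hcount hmeasC hpd _
  have hsplitg : ∫⁻ x in U, ENNReal.ofReal (g x) = ∑' C : 𝒞, ∫⁻ x in (C : Set ℝ), ENNReal.ofReal (g x) := by
    conv_lhs => rw [hUeq]
    exact MeasureTheory.lintegral_biUnion hcount hmeasC hpd _
  have hcompE : ∀ C : 𝒞, ∫⁻ x in (C : Set ℝ), ENNReal.ofReal (f x) ≤
      ∫⁻ x in (C : Set ℝ), ENNReal.ofReal (g x) := by
    rintro ⟨C, x, hx, rfl⟩
    have hfi' : IntegrableOn f (Ioo (P x) (Q x)) :=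
      (hfc.integrableOn_Icc).mono_set Ioo_subset_Icc_self
    have hgi' : IntegrableOn g (Ioo (P x) (Q x)) :=
      (hgc.integrableOn_Icc).mono_set Ioo_subset_Icc_self
    rw [← MeasureTheory.ofReal_integral_eq_lintegral_ofReal hfi'
        (Filter.Eventually.of_forall hfnn),
      ← MeasureTheory.ofReal_integral_eq_lintegral_ofReal hgi'
        (Filter.Eventually.of_forall hgnn)]
    exact ENNReal.ofReal_le_ofReal (hcomp x hx)
  have hUm : MeasurableSet U := hUopen.measurableSet
  have hSsplit : ∫⁻ x in S, ENNReal.ofReal (f x) = ∫⁻ x in U, ENNReal.ofReal (f x) := by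
    have hSU : S = U ∪ (S \ U) := (Set.union_diff_cancel hUS).symm
    rw [hSU, MeasureTheory.lintegral_union (measurableSet_Ioo.diff hUm) disjoint_sdiff_right]
    have h0 : ∫⁻ x in S \ U, ENNReal.ofReal (f x) = 0 := by
      have hzero : ∀ x ∈ S \ U, ENNReal.ofReal (f x) = 0 := by
        intro x hx
        have hz : deriv ζ x = 0 := by
          by_contra hzz
          exact hx.2 ⟨hx.1, hzz⟩
        show ENNReal.ofReal (|deriv ζ x| ^ ((4:ℝ)/3)) = 0
        rw [hz, abs_zero, Real.zero_rpow (by norm_num : ((4:ℝ)/3) ≠ 0), ENNReal.ofReal_zero]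
      calc ∫⁻ x in S \ U, ENNReal.ofReal (f x) = ∫⁻ _x in S \ U, 0 :=
            MeasureTheory.setLIntegral_congr_fun (measurableSet_Ioo.diff hUm)
              hzero
        _ = 0 := MeasureTheory.lintegral_zero
    rw [h0, add_zero]
  have key : ∫⁻ x in S, ENNReal.ofReal (f x) ≤ ∫⁻ x in S, ENNReal.ofReal (g x) := by
    calc ∫⁻ x in S, ENNReal.ofReal (f x) = ∫⁻ x in U, ENNReal.ofReal (f x) := hSsplit
      _ = ∑' C : 𝒞, ∫⁻ x in (C : Set ℝ), ENNReal.ofReal (f x) := hsplitf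
      _ ≤ ∑' C : 𝒞, ∫⁻ x in (C : Set ℝ), ENNReal.ofReal (g x) := ENNReal.tsum_le_tsum hcompE
      _ = ∫⁻ x in U, ENNReal.ofReal (g x) := hsplitg.symm
      _ ≤ ∫⁻ x in S, ENNReal.ofReal (g x) := MeasureTheory.lintegral_mono_set hUS
  have e1 : ENNReal.ofReal (∫ x in S, f x) = ∫⁻ x in S, ENNReal.ofReal (f x) :=
    MeasureTheory.ofReal_integral_eq_lintegral_ofReal hfi (Filter.Eventually.of_forall hfnn)
  have e2 : ENNReal.ofReal (∫ x in S, g x) = ∫⁻ x in S, ENNReal.ofReal (g x) :=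
    MeasureTheory.ofReal_integral_eq_lintegral_ofReal hgi (Filter.Eventually.of_forall hgnn)
  have hfin : ENNReal.ofReal (∫ x in S, f x) ≤ ENNReal.ofReal (∫ x in S, g x) := by
    rw [e1, e2]; exact key
  exact (ENNReal.ofReal_le_ofReal_iff
    (MeasureTheory.setIntegral_nonneg measurableSet_Ioo (fun x _ => hgnn x))).mp hfin

/-- Multiplicative interpolation inequality for periodic functions, uniform in the
period `a`. -/
theorem stmt_4 : ∃ C > 0, ∀ (a : ℝ), 0 < a → ∀ (ζ : ℝ → ℝ), ContDiff ℝ 2 ζ →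
    (∀ s, ζ (s + a) = ζ s) →
    (∫ s in (0:ℝ)..a, |deriv ζ s| ^ ((4:ℝ)/3)) ^ ((3:ℝ)/4) ≤
      C * (∫ s in (0:ℝ)..a, (ζ s) ^ 2) ^ ((1:ℝ)/4)
        * (∫ s in (0:ℝ)..a, |deriv (deriv ζ) s|) ^ ((1:ℝ)/2) := by
  refine ⟨(4:ℝ) ^ ((3:ℝ)/4), by positivity, ?_⟩
  intro a ha ζ hζ hper
  have hc1 : Continuous (deriv ζ) := hζ.continuous_deriv (by norm_num)
  have h2 : ContDiff ℝ (1+1) ζ := by exact_mod_cast hζ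
  have h1 : ContDiff ℝ 1 (deriv ζ) := (contDiff_succ_iff_deriv.mp h2).2.2
  have hc2 : Continuous (deriv (deriv ζ)) := h1.continuous_deriv le_rfl
  set T := ∫ s in (0:ℝ)..a, |deriv ζ s| ^ ((4:ℝ)/3) with hT
  set A := ∫ s in (0:ℝ)..a, (ζ s) ^ 2 with hA
  set V := ∫ s in (0:ℝ)..a, |deriv (deriv ζ) s| with hV
  have hTnn : 0 ≤ T := intervalIntegral.integral_nonneg ha.le
    (fun u _ => Real.rpow_nonneg (abs_nonneg _) _)
  have hAnn : 0 ≤ A := intervalIntegral.integral_nonneg ha.le (fun u _ => sq_nonneg _)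
  have hVnn : 0 ≤ V := intervalIntegral.integral_nonneg ha.le (fun u _ => abs_nonneg _)
  obtain ⟨x₀, hx₀I, hx₀⟩ := exists_deriv_zero ζ hζ ha hper
  have hdper : ∀ s, deriv ζ (s + a) = deriv ζ s := periodic_deriv_eq ζ hper
  have hddper : ∀ s, deriv (deriv ζ) (s + a) = deriv (deriv ζ) s :=
    periodic_deriv_eq (deriv ζ) hdper
  have hperF : Function.Periodic (fun s => |deriv ζ s| ^ ((4:ℝ)/3)) a := fun s => by dsimp only; rw [hdper]
  have hperA : Function.Periodic (fun s => (ζ s) ^ 2) a := fun s => by dsimp only; rw [hper]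
  have hperV : Function.Periodic (fun s => |deriv (deriv ζ) s|) a := fun s => by dsimp only; rw [hddper]
  have hshiftT : ∫ s in x₀..(x₀ + a), |deriv ζ s| ^ ((4:ℝ)/3) = T := by
    rw [hT]
    have := hperF.intervalIntegral_add_eq x₀ 0
    simpa using this
  have hshiftA : ∫ s in x₀..(x₀ + a), (ζ s) ^ 2 = A := by
    rw [hA]
    have := hperA.intervalIntegral_add_eq x₀ 0
    simpa using this
  have hshiftV : ∫ s in x₀..(x₀ + a), |deriv (deriv ζ) s| = V := by
    rw [hV]
    have := hperV.intervalIntegral_add_eq x₀ 0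
    simpa using this
  have hkey : ∀ t : ℝ, 0 < t → T ≤ (4/3) * t * A + (8/3) * t ^ (-(1:ℝ)/2) * V := by
    intro t ht
    have hgb := global_bound ζ hζ ha hper hx₀ ht
    have hsplit : ∫ x in x₀..(x₀ + a),
        ((4/3) * t * (ζ x)^2 + (8/3) * t ^ (-(1:ℝ)/2) * |deriv (deriv ζ) x|)
        = (4/3) * t * (∫ x in x₀..(x₀ + a), (ζ x)^2)
          + (8/3) * t ^ (-(1:ℝ)/2) * (∫ x in x₀..(x₀ + a), |deriv (deriv ζ) x|) := by
      rw [intervalIntegral.integral_add (f := fun x => (4/3) * t * (ζ x)^2)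
        (g := fun x => (8/3) * t ^ (-(1:ℝ)/2) * |deriv (deriv ζ) x|)
        ((continuous_const.mul (hζ.continuous.pow 2)).intervalIntegrable _ _)
        ((continuous_const.mul hc2.abs).intervalIntegrable _ _),
        intervalIntegral.integral_const_mul, intervalIntegral.integral_const_mul]
    rw [hsplit, hshiftT, hshiftA, hshiftV] at hgb
    exact hgb
  have hmain : T ≤ 4 * A ^ ((1:ℝ)/3) * V ^ ((2:ℝ)/3) := by
    by_cases hAV : 0 < A ∧ 0 < V
    · obtain ⟨hApos, hVpos⟩ := hAV
      set t := V ^ ((2:ℝ)/3) * A ^ (-(2:ℝ)/3) with htdef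
      have htpos : 0 < t :=
        mul_pos (Real.rpow_pos_of_pos hVpos _) (Real.rpow_pos_of_pos hApos _)
      have hk := hkey t htpos
      have e1 : t * A = V ^ ((2:ℝ)/3) * A ^ ((1:ℝ)/3) := by
        have : A ^ (-(2:ℝ)/3) * A = A ^ ((1:ℝ)/3) := by
          nth_rewrite 2 [← Real.rpow_one A]
          rw [← Real.rpow_add hApos]; norm_num
        rw [htdef, mul_assoc, this]
      have e2 : t ^ (-(1:ℝ)/2) * V = V ^ ((2:ℝ)/3) * A ^ ((1:ℝ)/3) := by
        have ha' : (A ^ (-(2:ℝ)/3)) ^ (-(1:ℝ)/2) = A ^ ((1:ℝ)/3) := by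
          rw [← Real.rpow_mul hAnn]; norm_num
        have hv' : (V ^ ((2:ℝ)/3)) ^ (-(1:ℝ)/2) = V ^ (-(1:ℝ)/3) := by
          rw [← Real.rpow_mul hVnn]; norm_num
        have hvv : V ^ (-(1:ℝ)/3) * V = V ^ ((2:ℝ)/3) := by
          nth_rewrite 2 [← Real.rpow_one V]
          rw [← Real.rpow_add hVpos]; norm_num
        rw [htdef, Real.mul_rpow (Real.rpow_nonneg hVnn _) (Real.rpow_nonneg hAnn _),
          ha', hv']
        rw [show V ^ (-(1:ℝ)/3) * A ^ ((1:ℝ)/3) * V = (V ^ (-(1:ℝ)/3) * V) * A ^ ((1:ℝ)/3) by ring,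
          hvv]
      calc T ≤ (4/3) * t * A + (8/3) * t ^ (-(1:ℝ)/2) * V := hk
        _ = (4/3) * (t * A) + (8/3) * (t ^ (-(1:ℝ)/2) * V) := by ring
        _ = (4/3) * (V ^ ((2:ℝ)/3) * A ^ ((1:ℝ)/3)) + (8/3) * (V ^ ((2:ℝ)/3) * A ^ ((1:ℝ)/3)) := by
            rw [e1, e2]
        _ = 4 * A ^ ((1:ℝ)/3) * V ^ ((2:ℝ)/3) := by ring
    · have hdeg : A = 0 ∨ V = 0 := by
        rcases not_and_or.mp hAV with h | h
        · left; linarith [hAnn, not_lt.mp h]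
        · right; linarith [hVnn, not_lt.mp h]
      have hT0 : T ≤ 0 := by
        by_contra hc
        push_neg at hc
        rcases hdeg with h0 | h0
        · -- A = 0 : T ≤ (8/3) t^{-1/2} V, make small
          set c := (8/3) * (V + 1) * (2 / T) with hcdef
          have hcpos : 0 < c := by
            apply mul_pos (mul_pos (by norm_num) (by linarith)) (by positivity)
          have hk := hkey (c ^ (2:ℕ)) (by positivity)
          have hinv : (c ^ (2:ℕ) : ℝ) ^ (-(1:ℝ)/2) = c⁻¹ := by
            rw [← Real.rpow_natCast c 2, ← Real.rpow_mul hcpos.le]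
            norm_num
            exact Real.rpow_neg_one c
          rw [h0, hinv] at hk
          have hinvle : (8/3) * c⁻¹ * V ≤ T / 2 := by
            rw [hcdef]
            rw [mul_inv, mul_inv]
            have hV1 : V / (V + 1) ≤ 1 := by
              rw [div_le_one (by linarith)]; linarith
            have : (8/3) * ((8/3)⁻¹ * (V + 1)⁻¹ * (2 / T)⁻¹) * V
                = (V / (V + 1)) * (T / 2) := by
              field_simp
            rw [this]
            calc (V / (V + 1)) * (T / 2) ≤ 1 * (T / 2) := by
                  apply mul_le_mul_of_nonneg_right hV1 (by linarith)
              _ = T / 2 := by ring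
          nlinarith
        · -- V = 0 : T ≤ (4/3) t A, make small
          set c := T / 2 / ((4/3) * (A + 1)) with hcdef
          have hcpos : 0 < c := by
            apply div_pos (by linarith) (by nlinarith)
          have hk := hkey c hcpos
          rw [h0] at hk
          have : (4/3) * c * A ≤ T / 2 := by
            rw [hcdef]
            have hA1 : A / (A + 1) ≤ 1 := by
              rw [div_le_one (by linarith)]; linarith
            have heq : (4/3) * (T / 2 / ((4/3) * (A + 1))) * A = (A / (A + 1)) * (T / 2) := by
              field_simp
            rw [heq]
            calc (A / (A + 1)) * (T / 2) ≤ 1 * (T / 2) := by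
                  apply mul_le_mul_of_nonneg_right hA1 (by linarith)
              _ = T / 2 := by ring
          nlinarith [Real.rpow_nonneg hcpos.le (-(1:ℝ)/2)]
      have hRnn : 0 ≤ 4 * A ^ ((1:ℝ)/3) * V ^ ((2:ℝ)/3) := by
        have := Real.rpow_nonneg hAnn ((1:ℝ)/3)
        have := Real.rpow_nonneg hVnn ((2:ℝ)/3)
        positivity
      linarith
  calc T ^ ((3:ℝ)/4) ≤ (4 * A ^ ((1:ℝ)/3) * V ^ ((2:ℝ)/3)) ^ ((3:ℝ)/4) :=
        Real.rpow_le_rpow hTnn hmain (by norm_num)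
    _ = (4:ℝ) ^ ((3:ℝ)/4) * A ^ ((1:ℝ)/4) * V ^ ((1:ℝ)/2) := by
        rw [Real.mul_rpow (by positivity) (Real.rpow_nonneg hVnn _),
          Real.mul_rpow (by norm_num) (Real.rpow_nonneg hAnn _),
          ← Real.rpow_mul hAnn, ← Real.rpow_mul hVnn]
        norm_num
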